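/- Let Q_K be the modified 2^K-ary QAM constellation. Then: (1) for K = 3, the maximum of |z|² over z ∈ Q_3 equals 10, and every z ∈ Q_3 with |z|² = 10 has exactly one point w ∈ Q_3 with |z − w| = 2, and that point satisfies |w|² = 2; (2) for even K ≥ 2, the maximum of |z|² over z ∈ Q_K equals 2(2^{K/2}−1)², and every z ∈ Q_K of maximal squared modulus has exactly two points w ∈ Q_K with |z − w| = 2, each satisfying |w|² = (2^{K/2}−1)² + (2^{K/2}−3)²; (3) for odd K ≥ 5, the maximum of |z|² over z ∈ Q_K equals (2^{(K−1)/2}−1)² + (3·2^{(K−3)/2}−1)², and every z ∈ Q_K of maximal squared modulus has exactly two points w ∈ Q_K with |z − w| = 2, whose squared moduli are (2^{(K−1)/2}−3)² + (3·2^{(K−3)/2}−1)² and (2^{(K−1)/2}−1)² + (3·2^{(K−3)/2}−3)². -/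

import Mathlib

/-- The modified `2^K`-ary QAM constellation. -/
noncomputable def modQAM (K : ℕ) : Set ℂ :=
  if K = 3 then
    ({1 + 3 * Complex.I, 1 + Complex.I, 3 - Complex.I, 1 - Complex.I,
      -1 - 3 * Complex.I, -1 - Complex.I, -3 + Complex.I, -1 + Complex.I} : Set ℂ)
  else if K % 2 = 0 then
    {z | ∃ m n : ℤ, -(2 : ℤ) ^ ((K - 2) / 2) + 1 ≤ m ∧ m ≤ (2 : ℤ) ^ ((K - 2) / 2) ∧
      -(2 : ℤ) ^ ((K - 2) / 2) + 1 ≤ n ∧ n ≤ (2 : ℤ) ^ ((K - 2) / 2) ∧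
      z = (2 * (m : ℂ) - 1) + (2 * (n : ℂ) - 1) * Complex.I}
  else
    {z | ∃ m n : ℤ, -(3 * (2 : ℤ) ^ ((K - 5) / 2)) + 1 ≤ m ∧ m ≤ 3 * (2 : ℤ) ^ ((K - 5) / 2) ∧
      -(2 : ℤ) ^ ((K - 3) / 2) + 1 ≤ n ∧ n ≤ (2 : ℤ) ^ ((K - 3) / 2) ∧
      z = (2 * (m : ℂ) - 1) + (2 * (n : ℂ) - 1) * Complex.I} ∪
    {z | ∃ m n : ℤ, -(2 : ℤ) ^ ((K - 3) / 2) + 1 ≤ m ∧ m ≤ (2 : ℤ) ^ ((K - 3) / 2) ∧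
      -(3 * (2 : ℤ) ^ ((K - 5) / 2)) + 1 ≤ n ∧ n ≤ 3 * (2 : ℤ) ^ ((K - 5) / 2) ∧
      z = (2 * (m : ℂ) - 1) + (2 * (n : ℂ) - 1) * Complex.I}

lemma abs_eq_two_iff' (z : ℂ) : ‖z‖ = 2 ↔ Complex.normSq z = 4 := by
  rw [← Complex.sq_norm]
  constructor
  · intro h; rw [h]; norm_num
  · intro h; nlinarith [norm_nonneg z]

lemma pt_absSq' (a b : ℤ) :
    ‖(2*(a:ℂ)-1) + (2*(b:ℂ)-1)*Complex.I‖ ^ 2 = (((2*a-1)^2 + (2*b-1)^2 : ℤ) : ℝ) := by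
  rw [Complex.sq_norm, Complex.normSq_apply]
  simp [Complex.add_re, Complex.add_im, Complex.mul_re, Complex.mul_im]
  ring

lemma pt_dist' (a b c d : ℤ) :
    ‖((2*(a:ℂ)-1) + (2*(b:ℂ)-1)*Complex.I) - ((2*(c:ℂ)-1) + (2*(d:ℂ)-1)*Complex.I)‖ = 2
      ↔ (a-c)^2 + (b-d)^2 = 1 := by
  rw [abs_eq_two_iff', Complex.normSq_apply]
  simp [Complex.sub_re, Complex.sub_im, Complex.add_re, Complex.add_im, Complex.mul_re,
    Complex.mul_im]
  constructor
  · intro h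
    have h2 : ((4 * ((a-c)^2 + (b-d)^2) : ℤ) : ℝ) = ((4:ℤ):ℝ) := by push_cast; nlinarith [h]
    have h3 := Int.cast_injective (α := ℝ) h2
    omega
  · intro h
    have h' : ((a:ℝ)-c)^2 + ((b:ℝ)-d)^2 = 1 := by
      have h2 : (((a-c)^2 + (b-d)^2 : ℤ) : ℝ) = 1 := by rw [h]; norm_num
      push_cast at h2; linarith
    nlinarith [h']

lemma pt_inj' (a b c d : ℤ) :
    ((2*(a:ℂ)-1) + (2*(b:ℂ)-1)*Complex.I) = ((2*(c:ℂ)-1) + (2*(d:ℂ)-1)*Complex.I)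
      ↔ a = c ∧ b = d := by
  rw [Complex.ext_iff]
  simp [Complex.add_re, Complex.add_im, Complex.mul_re, Complex.mul_im]

lemma one_step' (e f : ℤ) (h : e^2 + f^2 = 1) :
    (e = 0 ∧ (f = 1 ∨ f = -1)) ∨ (f = 0 ∧ (e = 1 ∨ e = -1)) := by
  have h1 : -1 ≤ e := by nlinarith [sq_nonneg f]
  have h2 : e ≤ 1 := by nlinarith [sq_nonneg f]
  have h3 : -1 ≤ f := by nlinarith [sq_nonneg e]
  have h4 : f ≤ 1 := by nlinarith [sq_nonneg e]
  interval_cases e <;> interval_cases f <;> omega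

lemma sq_bound' (x B : ℤ) (h1 : -B+1 ≤ x) (h2 : x ≤ B) : (2*x-1)^2 ≤ (2*B-1)^2 := by nlinarith

lemma sq_corner' (x B : ℤ) (h : (2*x-1)^2 = (2*B-1)^2) : x = B ∨ x = 1-B := by
  have h2 : (2*x-1-(2*B-1))*(2*x-1+(2*B-1)) = 0 := by linear_combination h
  rcases mul_eq_zero.mp h2 with h|h <;> omega

lemma corner_case_even' (N m n : ℤ) (hN : 1 ≤ N)
    (hm : m = N ∨ m = 1 - N) (hn : n = N ∨ n = 1 - N) :
    ∃ m1 n2 : ℤ, (-N+1 ≤ m1 ∧ m1 ≤ N) ∧ (-N+1 ≤ n2 ∧ n2 ≤ N) ∧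
      m1 ≠ m ∧ (m-m1)^2 + (n-n)^2 = 1 ∧ (m-m)^2 + (n-n2)^2 = 1 ∧
      (2*m1-1)^2 + (2*n-1)^2 = (2*N-1)^2 + (2*N-3)^2 ∧
      (2*m-1)^2 + (2*n2-1)^2 = (2*N-1)^2 + (2*N-3)^2 ∧
      (∀ p q : ℤ, -N+1 ≤ p → p ≤ N → -N+1 ≤ q → q ≤ N → (m-p)^2+(n-q)^2 = 1 →
        (p = m1 ∧ q = n) ∨ (p = m ∧ q = n2)) := by
  rcases hm with hm | hm <;> rcases hn with hn | hn
  · refine ⟨m-1, n-1, ⟨by omega, by omega⟩, ⟨by omega, by omega⟩, by omega, by ring, by ring,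
      by rw [hm, hn]; ring, by rw [hm, hn]; ring, ?_⟩
    intro p q b1 b2 b3 b4 h
    rcases one_step' _ _ h with ⟨h1,h2⟩|⟨h1,h2⟩ <;> omega
  · refine ⟨m-1, n+1, ⟨by omega, by omega⟩, ⟨by omega, by omega⟩, by omega, by ring, by ring,
      by rw [hm, hn]; ring, by rw [hm, hn]; ring, ?_⟩
    intro p q b1 b2 b3 b4 h
    rcases one_step' _ _ h with ⟨h1,h2⟩|⟨h1,h2⟩ <;> omega
  · refine ⟨m+1, n-1, ⟨by omega, by omega⟩, ⟨by omega, by omega⟩, by omega, by ring, by ring,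
      by rw [hm, hn]; ring, by rw [hm, hn]; ring, ?_⟩
    intro p q b1 b2 b3 b4 h
    rcases one_step' _ _ h with ⟨h1,h2⟩|⟨h1,h2⟩ <;> omega
  · refine ⟨m+1, n+1, ⟨by omega, by omega⟩, ⟨by omega, by omega⟩, by omega, by ring, by ring,
      by rw [hm, hn]; ring, by rw [hm, hn]; ring, ?_⟩
    intro p q b1 b2 b3 b4 h
    rcases one_step' _ _ h with ⟨h1,h2⟩|⟨h1,h2⟩ <;> omega

lemma corner_case_odd' (Q m n : ℤ) (hQ : 1 ≤ Q)
    (hc : ((m = 3*Q ∨ m = 1-3*Q) ∧ (n = 2*Q ∨ n = 1-2*Q)) ∨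
          ((m = 2*Q ∨ m = 1-2*Q) ∧ (n = 3*Q ∨ n = 1-3*Q))) :
    ∃ a1 b1 a2 b2 : ℤ,
      ((-(3*Q)+1 ≤ a1 ∧ a1 ≤ 3*Q ∧ -(2*Q)+1 ≤ b1 ∧ b1 ≤ 2*Q) ∨
       (-(2*Q)+1 ≤ a1 ∧ a1 ≤ 2*Q ∧ -(3*Q)+1 ≤ b1 ∧ b1 ≤ 3*Q)) ∧
      ((-(3*Q)+1 ≤ a2 ∧ a2 ≤ 3*Q ∧ -(2*Q)+1 ≤ b2 ∧ b2 ≤ 2*Q) ∨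
       (-(2*Q)+1 ≤ a2 ∧ a2 ≤ 2*Q ∧ -(3*Q)+1 ≤ b2 ∧ b2 ≤ 3*Q)) ∧
      a1 ≠ a2 ∧
      (m-a1)^2+(n-b1)^2 = 1 ∧ (m-a2)^2+(n-b2)^2 = 1 ∧
      (2*a1-1)^2+(2*b1-1)^2 = (4*Q-3)^2+(6*Q-1)^2 ∧
      (2*a2-1)^2+(2*b2-1)^2 = (4*Q-1)^2+(6*Q-3)^2 ∧
      ∀ p q : ℤ,
        ((-(3*Q)+1 ≤ p ∧ p ≤ 3*Q ∧ -(2*Q)+1 ≤ q ∧ q ≤ 2*Q) ∨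
         (-(2*Q)+1 ≤ p ∧ p ≤ 2*Q ∧ -(3*Q)+1 ≤ q ∧ q ≤ 3*Q)) →
        (m-p)^2+(n-q)^2 = 1 → (p = a1 ∧ q = b1) ∨ (p = a2 ∧ q = b2) := by
  rcases hc with ⟨hm, hn⟩ | ⟨hm, hn⟩ <;> rcases hm with hm | hm <;> rcases hn with hn | hn
  · refine ⟨m, n-1, m-1, n, Or.inl ⟨by omega, by omega, by omega, by omega⟩,
      Or.inl ⟨by omega, by omega, by omega, by omega⟩, by omega, by ring, by ring,
      by rw [hm, hn]; ring, by rw [hm, hn]; ring, ?_⟩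
    intro p q hb h
    rcases one_step' _ _ h with ⟨h1,h2⟩|⟨h1,h2⟩ <;> rcases hb with hb|hb <;> omega
  · refine ⟨m, n+1, m-1, n, Or.inl ⟨by omega, by omega, by omega, by omega⟩,
      Or.inl ⟨by omega, by omega, by omega, by omega⟩, by omega, by ring, by ring,
      by rw [hm, hn]; ring, by rw [hm, hn]; ring, ?_⟩
    intro p q hb h
    rcases one_step' _ _ h with ⟨h1,h2⟩|⟨h1,h2⟩ <;> rcases hb with hb|hb <;> omega
  · refine ⟨m, n-1, m+1, n, Or.inl ⟨by omega, by omega, by omega, by omega⟩,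
      Or.inl ⟨by omega, by omega, by omega, by omega⟩, by omega, by ring, by ring,
      by rw [hm, hn]; ring, by rw [hm, hn]; ring, ?_⟩
    intro p q hb h
    rcases one_step' _ _ h with ⟨h1,h2⟩|⟨h1,h2⟩ <;> rcases hb with hb|hb <;> omega
  · refine ⟨m, n+1, m+1, n, Or.inl ⟨by omega, by omega, by omega, by omega⟩,
      Or.inl ⟨by omega, by omega, by omega, by omega⟩, by omega, by ring, by ring,
      by rw [hm, hn]; ring, by rw [hm, hn]; ring, ?_⟩
    intro p q hb h
    rcases one_step' _ _ h with ⟨h1,h2⟩|⟨h1,h2⟩ <;> rcases hb with hb|hb <;> omega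
  · refine ⟨m-1, n, m, n-1, Or.inr ⟨by omega, by omega, by omega, by omega⟩,
      Or.inr ⟨by omega, by omega, by omega, by omega⟩, by omega, by ring, by ring,
      by rw [hm, hn]; ring, by rw [hm, hn]; ring, ?_⟩
    intro p q hb h
    rcases one_step' _ _ h with ⟨h1,h2⟩|⟨h1,h2⟩ <;> rcases hb with hb|hb <;> omega
  · refine ⟨m-1, n, m, n+1, Or.inr ⟨by omega, by omega, by omega, by omega⟩,
      Or.inr ⟨by omega, by omega, by omega, by omega⟩, by omega, by ring, by ring,
      by rw [hm, hn]; ring, by rw [hm, hn]; ring, ?_⟩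
    intro p q hb h
    rcases one_step' _ _ h with ⟨h1,h2⟩|⟨h1,h2⟩ <;> rcases hb with hb|hb <;> omega
  · refine ⟨m+1, n, m, n-1, Or.inr ⟨by omega, by omega, by omega, by omega⟩,
      Or.inr ⟨by omega, by omega, by omega, by omega⟩, by omega, by ring, by ring,
      by rw [hm, hn]; ring, by rw [hm, hn]; ring, ?_⟩
    intro p q hb h
    rcases one_step' _ _ h with ⟨h1,h2⟩|⟨h1,h2⟩ <;> rcases hb with hb|hb <;> omega
  · refine ⟨m+1, n, m, n+1, Or.inr ⟨by omega, by omega, by omega, by omega⟩,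
      Or.inr ⟨by omega, by omega, by omega, by omega⟩, by omega, by ring, by ring,
      by rw [hm, hn]; ring, by rw [hm, hn]; ring, ?_⟩
    intro p q hb h
    rcases one_step' _ _ h with ⟨h1,h2⟩|⟨h1,h2⟩ <;> rcases hb with hb|hb <;> omega

/-- Largest energies and nearest neighbors of largest-energy corner points in
the modified `2^K`-ary QAM constellations. -/
theorem modQAM_corner_energies :
    -- (1) the case K = 3
    ((∀ z ∈ modQAM 3, ‖z‖ ^ 2 ≤ 10) ∧
     (∃ z ∈ modQAM 3, ‖z‖ ^ 2 = 10) ∧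
     (∀ z ∈ modQAM 3, ‖z‖ ^ 2 = 10 →
        ∃ w ∈ modQAM 3, ‖z - w‖ = 2 ∧ ‖w‖ ^ 2 = 2 ∧
          ∀ w' ∈ modQAM 3, ‖z - w'‖ = 2 → w' = w)) ∧
    -- (2) the case of even K ≥ 2
    (∀ K : ℕ, 2 ≤ K → K % 2 = 0 →
      (∀ z ∈ modQAM K, ‖z‖ ^ 2 ≤ 2 * ((2 : ℝ) ^ (K / 2) - 1) ^ 2) ∧
      (∃ z ∈ modQAM K, ‖z‖ ^ 2 = 2 * ((2 : ℝ) ^ (K / 2) - 1) ^ 2) ∧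
      (∀ z ∈ modQAM K, ‖z‖ ^ 2 = 2 * ((2 : ℝ) ^ (K / 2) - 1) ^ 2 →
        ∃ w1 ∈ modQAM K, ∃ w2 ∈ modQAM K, w1 ≠ w2 ∧
          ‖z - w1‖ = 2 ∧ ‖z - w2‖ = 2 ∧
          ‖w1‖ ^ 2 = ((2 : ℝ) ^ (K / 2) - 1) ^ 2 + ((2 : ℝ) ^ (K / 2) - 3) ^ 2 ∧
          ‖w2‖ ^ 2 = ((2 : ℝ) ^ (K / 2) - 1) ^ 2 + ((2 : ℝ) ^ (K / 2) - 3) ^ 2 ∧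
          ∀ w ∈ modQAM K, ‖z - w‖ = 2 → w = w1 ∨ w = w2)) ∧
    -- (3) the case of odd K ≥ 5
    (∀ K : ℕ, 5 ≤ K → K % 2 = 1 →
      (∀ z ∈ modQAM K, ‖z‖ ^ 2 ≤
          ((2 : ℝ) ^ ((K - 1) / 2) - 1) ^ 2 + (3 * (2 : ℝ) ^ ((K - 3) / 2) - 1) ^ 2) ∧
      (∃ z ∈ modQAM K, ‖z‖ ^ 2 =
          ((2 : ℝ) ^ ((K - 1) / 2) - 1) ^ 2 + (3 * (2 : ℝ) ^ ((K - 3) / 2) - 1) ^ 2) ∧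
      (∀ z ∈ modQAM K, ‖z‖ ^ 2 =
          ((2 : ℝ) ^ ((K - 1) / 2) - 1) ^ 2 + (3 * (2 : ℝ) ^ ((K - 3) / 2) - 1) ^ 2 →
        ∃ w1 ∈ modQAM K, ∃ w2 ∈ modQAM K, w1 ≠ w2 ∧
          ‖z - w1‖ = 2 ∧ ‖z - w2‖ = 2 ∧
          ‖w1‖ ^ 2 =
            ((2 : ℝ) ^ ((K - 1) / 2) - 3) ^ 2 + (3 * (2 : ℝ) ^ ((K - 3) / 2) - 1) ^ 2 ∧
          ‖w2‖ ^ 2 =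
            ((2 : ℝ) ^ ((K - 1) / 2) - 1) ^ 2 + (3 * (2 : ℝ) ^ ((K - 3) / 2) - 3) ^ 2 ∧
          ∀ w ∈ modQAM K, ‖z - w‖ = 2 → w = w1 ∨ w = w2)) := by

  refine ⟨⟨?_, ?_, ?_⟩, ?_, ?_⟩
  · -- (1a)
    intro z hz
    simp only [modQAM, if_pos rfl, Set.mem_insert_iff, Set.mem_singleton_iff] at hz
    rcases hz with rfl|rfl|rfl|rfl|rfl|rfl|rfl|rfl <;>
      · rw [Complex.sq_norm]; simp [Complex.normSq_apply]; norm_num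
  · -- (1b)
    refine ⟨1 + 3*Complex.I, ?_, ?_⟩
    · simp [modQAM]
    · rw [Complex.sq_norm]; simp [Complex.normSq_apply]; norm_num
  · -- (1c)
    intro z hz hmax
    simp only [modQAM, if_pos rfl, Set.mem_insert_iff, Set.mem_singleton_iff] at hz
    rcases hz with rfl|rfl|rfl|rfl|rfl|rfl|rfl|rfl
    · refine ⟨1 + Complex.I, by simp [modQAM], ?_, ?_, ?_⟩
      · rw [abs_eq_two_iff']; simp [Complex.normSq_apply]; norm_num
      · rw [Complex.sq_norm]; simp [Complex.normSq_apply]; norm_num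
      · intro w' hw' hd
        simp only [modQAM, if_pos rfl, Set.mem_insert_iff, Set.mem_singleton_iff] at hw'
        rcases hw' with rfl|rfl|rfl|rfl|rfl|rfl|rfl|rfl <;>
          first
          | rfl
          | (rw [abs_eq_two_iff'] at hd; norm_num [Complex.normSq_apply] at hd)
    · exfalso; rw [Complex.sq_norm] at hmax; norm_num [Complex.normSq_apply] at hmax
    · refine ⟨1 - Complex.I, by simp [modQAM], ?_, ?_, ?_⟩
      · rw [abs_eq_two_iff']; simp [Complex.normSq_apply]; norm_num
      · rw [Complex.sq_norm]; simp [Complex.normSq_apply]; norm_num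
      · intro w' hw' hd
        simp only [modQAM, if_pos rfl, Set.mem_insert_iff, Set.mem_singleton_iff] at hw'
        rcases hw' with rfl|rfl|rfl|rfl|rfl|rfl|rfl|rfl <;>
          first
          | rfl
          | (rw [abs_eq_two_iff'] at hd; norm_num [Complex.normSq_apply] at hd)
    · exfalso; rw [Complex.sq_norm] at hmax; norm_num [Complex.normSq_apply] at hmax
    · refine ⟨-1 - Complex.I, by simp [modQAM], ?_, ?_, ?_⟩
      · rw [abs_eq_two_iff']; simp [Complex.normSq_apply]; norm_num
      · rw [Complex.sq_norm]; simp [Complex.normSq_apply]; norm_num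
      · intro w' hw' hd
        simp only [modQAM, if_pos rfl, Set.mem_insert_iff, Set.mem_singleton_iff] at hw'
        rcases hw' with rfl|rfl|rfl|rfl|rfl|rfl|rfl|rfl <;>
          first
          | rfl
          | (rw [abs_eq_two_iff'] at hd; norm_num [Complex.normSq_apply] at hd)
    · exfalso; rw [Complex.sq_norm] at hmax; norm_num [Complex.normSq_apply] at hmax
    · refine ⟨-1 + Complex.I, by simp [modQAM], ?_, ?_, ?_⟩
      · rw [abs_eq_two_iff']; simp [Complex.normSq_apply]; norm_num
      · rw [Complex.sq_norm]; simp [Complex.normSq_apply]; norm_num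
      · intro w' hw' hd
        simp only [modQAM, if_pos rfl, Set.mem_insert_iff, Set.mem_singleton_iff] at hw'
        rcases hw' with rfl|rfl|rfl|rfl|rfl|rfl|rfl|rfl <;>
          first
          | rfl
          | (rw [abs_eq_two_iff'] at hd; norm_num [Complex.normSq_apply] at hd)
    · exfalso; rw [Complex.sq_norm] at hmax; norm_num [Complex.normSq_apply] at hmax
  · -- (2) even case
    intro K hK2 hKe
    have hK3 : K ≠ 3 := by omega
    set N : ℤ := 2 ^ ((K - 2) / 2) with hNdef
    have hN : 1 ≤ N := by rw [hNdef]; exact one_le_pow₀ (by norm_num)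
    have hmem : ∀ z : ℂ, z ∈ modQAM K ↔
        ∃ m n : ℤ, -N+1 ≤ m ∧ m ≤ N ∧ -N+1 ≤ n ∧ n ≤ N ∧
          z = (2*(m:ℂ)-1) + (2*(n:ℂ)-1)*Complex.I := by
      intro z
      rw [modQAM, if_neg hK3, if_pos hKe]
      simp only [Set.mem_setOf_eq, ← hNdef]
    have hcast : (2:ℝ) ^ (K / 2) = 2 * (N:ℝ) := by
      have h2 : K / 2 = (K-2)/2 + 1 := by omega
      rw [h2, pow_succ, hNdef]
      push_cast
      ring
    refine ⟨?_, ?_, ?_⟩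
    · intro z hz
      obtain ⟨m, n, b1, b2, b3, b4, rfl⟩ := (hmem z).1 hz
      rw [pt_absSq', hcast]
      have hineq : ((2*m-1)^2 + (2*n-1)^2 : ℤ) ≤ 2*(2*N-1)^2 := by
        have h1 := sq_bound' m N b1 b2
        have h2 := sq_bound' n N b3 b4
        linarith
      have hR : (((2*m-1)^2 + (2*n-1)^2 : ℤ) : ℝ) ≤ ((2*(2*N-1)^2 : ℤ) : ℝ) := by
        exact_mod_cast hineq
      push_cast at hR ⊢
      nlinarith [hR]
    · refine ⟨_, (hmem _).2 ⟨N, N, by omega, by omega, by omega, by omega, rfl⟩, ?_⟩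
      rw [pt_absSq', hcast]
      push_cast
      ring
    · intro z hz hmax
      obtain ⟨m, n, b1, b2, b3, b4, rfl⟩ := (hmem z).1 hz
      rw [pt_absSq', hcast] at hmax
      have hZ : ((2*m-1)^2 + (2*n-1)^2 : ℤ) = 2*(2*N-1)^2 := by
        have h2 : (((2*m-1)^2 + (2*n-1)^2 : ℤ) : ℝ) = ((2*(2*N-1)^2 : ℤ) : ℝ) := by
          rw [hmax]; push_cast; ring
        exact_mod_cast h2
      have h1 := sq_bound' m N b1 b2
      have h2 := sq_bound' n N b3 b4
      have hm : m = N ∨ m = 1 - N := sq_corner' m N (by linarith)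
      have hn : n = N ∨ n = 1 - N := sq_corner' n N (by linarith)
      obtain ⟨m1, n2, ⟨c1,c2⟩, ⟨c3,c4⟩, hne, hd1, hd2, hE1, hE2, huniq⟩ :=
        corner_case_even' N m n hN hm hn
      refine ⟨_, (hmem _).2 ⟨m1, n, c1, c2, b3, b4, rfl⟩,
              _, (hmem _).2 ⟨m, n2, b1, b2, c3, c4, rfl⟩, ?_, ?_, ?_, ?_, ?_, ?_⟩
      · rw [Ne, pt_inj']
        rintro ⟨h, -⟩
        exact hne h
      · rw [pt_dist']; exact hd1
      · rw [pt_dist']; exact hd2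
      · rw [pt_absSq', hcast,
          show ((2*m1-1)^2+(2*n-1)^2 : ℤ) = (2*N-1)^2+(2*N-3)^2 from hE1]
        push_cast; ring
      · rw [pt_absSq', hcast,
          show ((2*m-1)^2+(2*n2-1)^2 : ℤ) = (2*N-1)^2+(2*N-3)^2 from hE2]
        push_cast; ring
      · intro w hw hd
        obtain ⟨p, q, d1, d2, d3, d4, rfl⟩ := (hmem w).1 hw
        rw [pt_dist'] at hd
        rcases huniq p q d1 d2 d3 d4 hd with ⟨rfl, rfl⟩ | ⟨rfl, rfl⟩
        · left; rfl
        · right; rfl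
  · -- (3) odd case
    intro K hK5 hKo
    have hK3 : K ≠ 3 := by omega
    have hKe : ¬ (K % 2 = 0) := by omega
    set Q : ℤ := 2 ^ ((K - 5) / 2) with hQdef
    have hQ : 1 ≤ Q := by rw [hQdef]; exact one_le_pow₀ (by norm_num)
    have hP : (2:ℤ) ^ ((K - 3) / 2) = 2 * Q := by
      rw [show (K-3)/2 = (K-5)/2 + 1 by omega, pow_succ, hQdef]
      ring
    have hmem : ∀ z : ℂ, z ∈ modQAM K ↔
        ∃ p q : ℤ, ((-(3*Q)+1 ≤ p ∧ p ≤ 3*Q ∧ -(2*Q)+1 ≤ q ∧ q ≤ 2*Q) ∨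
                    (-(2*Q)+1 ≤ p ∧ p ≤ 2*Q ∧ -(3*Q)+1 ≤ q ∧ q ≤ 3*Q)) ∧
          z = (2*(p:ℂ)-1) + (2*(q:ℂ)-1)*Complex.I := by
      intro z
      rw [modQAM, if_neg hK3, if_neg hKe, Set.mem_union]
      simp only [Set.mem_setOf_eq, hP, ← hQdef]
      constructor
      · rintro (⟨m, n, h1, h2, h3, h4, rfl⟩ | ⟨m, n, h1, h2, h3, h4, rfl⟩)
        · exact ⟨m, n, Or.inl ⟨h1, h2, h3, h4⟩, rfl⟩
        · exact ⟨m, n, Or.inr ⟨h1, h2, h3, h4⟩, rfl⟩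
      · rintro ⟨p, q, (⟨h1,h2,h3,h4⟩|⟨h1,h2,h3,h4⟩), rfl⟩
        · exact Or.inl ⟨p, q, h1, h2, h3, h4, rfl⟩
        · exact Or.inr ⟨p, q, h1, h2, h3, h4, rfl⟩
    have hcast1 : (2:ℝ) ^ ((K-1)/2) = 4 * (Q:ℝ) := by
      rw [show (K-1)/2 = (K-5)/2 + 2 by omega, pow_add, hQdef]
      push_cast
      ring
    have hcast2 : (2:ℝ) ^ ((K-3)/2) = 2 * (Q:ℝ) := by
      rw [show (K-3)/2 = (K-5)/2 + 1 by omega, pow_succ, hQdef]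
      push_cast
      ring
    refine ⟨?_, ?_, ?_⟩
    · intro z hz
      obtain ⟨m, n, hb, rfl⟩ := (hmem z).1 hz
      rw [pt_absSq', hcast1, hcast2]
      have hineq : ((2*m-1)^2 + (2*n-1)^2 : ℤ) ≤ (4*Q-1)^2 + (6*Q-1)^2 := by
        rcases hb with ⟨h1,h2,h3,h4⟩|⟨h1,h2,h3,h4⟩
        · nlinarith [sq_bound' m (3*Q) h1 h2, sq_bound' n (2*Q) h3 h4]
        · nlinarith [sq_bound' m (2*Q) h1 h2, sq_bound' n (3*Q) h3 h4]
      have hR : (((2*m-1)^2 + (2*n-1)^2 : ℤ) : ℝ) ≤ (((4*Q-1)^2 + (6*Q-1)^2 : ℤ) : ℝ) := by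
        exact_mod_cast hineq
      push_cast at hR ⊢
      nlinarith [hR]
    · refine ⟨_, (hmem _).2 ⟨3*Q, 2*Q, Or.inl ⟨by omega, by omega, by omega, by omega⟩, rfl⟩, ?_⟩
      rw [pt_absSq', hcast1, hcast2]
      push_cast
      ring
    · intro z hz hmax
      obtain ⟨m, n, hb, rfl⟩ := (hmem z).1 hz
      rw [pt_absSq', hcast1, hcast2] at hmax
      have hZ : ((2*m-1)^2 + (2*n-1)^2 : ℤ) = (4*Q-1)^2 + (6*Q-1)^2 := by
        have h2 : (((2*m-1)^2 + (2*n-1)^2 : ℤ) : ℝ) = (((4*Q-1)^2 + (6*Q-1)^2 : ℤ) : ℝ) := by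
          rw [hmax]; push_cast; ring
        exact_mod_cast h2
      have hc : ((m = 3*Q ∨ m = 1-3*Q) ∧ (n = 2*Q ∨ n = 1-2*Q)) ∨
          ((m = 2*Q ∨ m = 1-2*Q) ∧ (n = 3*Q ∨ n = 1-3*Q)) := by
        rcases hb with ⟨h1,h2,h3,h4⟩|⟨h1,h2,h3,h4⟩
        · have s1 := sq_bound' m (3*Q) h1 h2
          have s2 := sq_bound' n (2*Q) h3 h4
          have etot : ((2*(3*Q)-1)^2 + (2*(2*Q)-1)^2 : ℤ) = (4*Q-1)^2+(6*Q-1)^2 := by ring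
          have e1 : (2*m-1)^2 = (2*(3*Q)-1)^2 := by linarith
          have e2 : (2*n-1)^2 = (2*(2*Q)-1)^2 := by linarith
          exact Or.inl ⟨by simpa using sq_corner' m (3*Q) e1, by simpa using sq_corner' n (2*Q) e2⟩
        · have s1 := sq_bound' m (2*Q) h1 h2
          have s2 := sq_bound' n (3*Q) h3 h4
          have etot : ((2*(2*Q)-1)^2 + (2*(3*Q)-1)^2 : ℤ) = (4*Q-1)^2+(6*Q-1)^2 := by ring
          have e1 : (2*m-1)^2 = (2*(2*Q)-1)^2 := by linarith
          have e2 : (2*n-1)^2 = (2*(3*Q)-1)^2 := by linarith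
          exact Or.inr ⟨by simpa using sq_corner' m (2*Q) e1, by simpa using sq_corner' n (3*Q) e2⟩
      obtain ⟨a1, b1', a2, b2', mem1, mem2, hne, hd1, hd2, hE1, hE2, huniq⟩ :=
        corner_case_odd' Q m n hQ hc
      refine ⟨_, (hmem _).2 ⟨a1, b1', mem1, rfl⟩, _, (hmem _).2 ⟨a2, b2', mem2, rfl⟩,
        ?_, ?_, ?_, ?_, ?_, ?_⟩
      · rw [Ne, pt_inj']
        rintro ⟨h, -⟩
        exact hne h
      · rw [pt_dist']; exact hd1
      · rw [pt_dist']; exact hd2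
      · rw [pt_absSq',
          show ((2*a1-1)^2+(2*b1'-1)^2 : ℤ) = (4*Q-3)^2+(6*Q-1)^2 from hE1, hcast1, hcast2]
        push_cast; ring
      · rw [pt_absSq',
          show ((2*a2-1)^2+(2*b2'-1)^2 : ℤ) = (4*Q-1)^2+(6*Q-3)^2 from hE2, hcast1, hcast2]
        push_cast; ring
      · intro w hw hd
        obtain ⟨p, q, hbw, rfl⟩ := (hmem w).1 hw
        rw [pt_dist'] at hd
        rcases huniq p q hbw hd with ⟨rfl, rfl⟩ | ⟨rfl, rfl⟩
        · left; rfl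
        · right; rfl
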